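/- Let p be an odd prime and 0 ≤ u < v < w. In the fraction field of F_p[y_1,y_2,y_3]: [u,v,w] = Σ_{s=u}^{v-1} [u,s+1][v,w] L_2^{−p^{s+1}} V_3^{p^s} + Σ_{s=v}^{w-1} [u,v][s+1,w] L_2^{−p^{s+1}} V_3^{p^s}, where [a,b] are 2×2 determinants in y_1,y_2, L_2 = [0,1], and V_3 = L_3/L_2. -/

import Mathlib

set_option maxHeartbeats 1000000
set_option synthInstance.maxHeartbeats 1000000

set_option linter.unusedSectionVars false

open MvPolynomial Finset

/-- `br p e = det (y_i ^ (p ^ e_j))` in `F_p[y_1,…,y_n]`. -/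
noncomputable def br (p : ℕ) {n : ℕ} (e : Fin n → ℕ) : MvPolynomial (Fin n) (ZMod p) :=
  Matrix.det (Matrix.of fun i j : Fin n => (X i : MvPolynomial (Fin n) (ZMod p)) ^ p ^ e j)

/-- `L_n = [0,1,…,n-1]`. -/
noncomputable def Lpoly (p n : ℕ) : MvPolynomial (Fin n) (ZMod p) :=
  br p (fun j : Fin n => (j : ℕ))

/-- `L_{n,s} = [0,…,ŝ,…,n]`. -/
noncomputable def Ls (p n s : ℕ) : MvPolynomial (Fin n) (ZMod p) :=
  br p (fun j : Fin n => if (j : ℕ) < s then (j : ℕ) else (j : ℕ) + 1)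

section Aux

variable (p : ℕ) [hp : Fact p.Prime]

lemma br2_eval (a b : ℕ) : br p ![a, b] =
    X 0 ^ p ^ a * X 1 ^ p ^ b - X 0 ^ p ^ b * X 1 ^ p ^ a := by
  simp [br, Matrix.det_fin_two]

lemma br3_laplace (a b c : ℕ) : br p ![a, b, c] =
    X 2 ^ p ^ a * rename Fin.castSucc (br p ![b, c])
    - X 2 ^ p ^ b * rename Fin.castSucc (br p ![a, c])
    + X 2 ^ p ^ c * rename Fin.castSucc (br p ![a, b]) := by
  simp only [br2_eval, map_sub, map_mul, map_pow, rename_X, Fin.castSucc_zero, Fin.castSucc_one]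
  simp [br, Matrix.det_fin_three]
  ring

lemma br2_plucker (a b c d : ℕ) :
    br p ![a, b] * br p ![c, d] - br p ![a, c] * br p ![b, d]
      + br p ![a, d] * br p ![b, c] = 0 := by
  simp only [br2_eval]; ring

lemma br2_self (a : ℕ) : br p ![a, a] = 0 := by simp [br2_eval]

lemma br2_swap (a b : ℕ) : br p ![b, a] = -br p ![a, b] := by
  simp only [br2_eval]; ring

lemma br_pow {n : ℕ} (e : Fin n → ℕ) : br p e ^ p = br p (fun j => e j + 1) := by
  have := (frobenius (MvPolynomial (Fin n) (ZMod p)) p).map_det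
    (Matrix.of fun i j : Fin n => (X i : MvPolynomial (Fin n) (ZMod p)) ^ p ^ e j)
  rw [br, show (Matrix.of fun i j : Fin n => (X i : MvPolynomial (Fin n) (ZMod p)) ^ p ^ e j).det ^ p
      = frobenius (MvPolynomial (Fin n) (ZMod p)) p
        (Matrix.of fun i j : Fin n => (X i : MvPolynomial (Fin n) (ZMod p)) ^ p ^ e j).det from rfl,
    this, br]
  congr 1
  ext i j
  simp [frobenius_def, ← pow_mul, pow_succ]

lemma br_pow_pow {n : ℕ} (e : Fin n → ℕ) (s : ℕ) :
    br p e ^ p ^ s = br p (fun j => e j + s) := by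
  induction s with
  | zero => simp
  | succ s ih =>
      rw [pow_succ, pow_mul, ih, br_pow]
      congr 1

lemma Lpoly2_eq : Lpoly p 2 = br p ![0, 1] := by
  unfold Lpoly; congr 1; funext j; fin_cases j <;> rfl

lemma Lpoly2_ne : Lpoly p 2 ≠ 0 := by
  rw [Lpoly2_eq, br2_eval]
  have h1 : (X 0 ^ p ^ 0 * X 1 ^ p ^ 1 : MvPolynomial (Fin 2) (ZMod p))
      = monomial (Finsupp.single 0 1 + Finsupp.single 1 p) 1 := by
    rw [X_pow_eq_monomial, X_pow_eq_monomial, monomial_mul, one_mul, pow_zero, pow_one]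
  have h2 : (X 0 ^ p ^ 1 * X 1 ^ p ^ 0 : MvPolynomial (Fin 2) (ZMod p))
      = monomial (Finsupp.single 0 p + Finsupp.single 1 1) 1 := by
    rw [X_pow_eq_monomial, X_pow_eq_monomial, monomial_mul, one_mul, pow_zero, pow_one]
  intro h
  have hm : (Finsupp.single (0 : Fin 2) 1 + Finsupp.single 1 p)
      ≠ (Finsupp.single (0 : Fin 2) p + Finsupp.single 1 1) := by
    intro he
    have := DFunLike.congr_fun he 0
    simp [Finsupp.single_apply] at this
    exact (Nat.Prime.one_lt hp.out).ne' this.symm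
  have := congrArg (coeff (Finsupp.single 0 1 + Finsupp.single 1 p)) h
  rw [coeff_sub, h1, h2, coeff_monomial, coeff_monomial, if_pos rfl,
    if_neg (fun he => hm he.symm)] at this
  simp at this

/-- `B_k a b` = image of the renamed 2×2 bracket in the fraction field. -/
noncomputable def Bk (a b : ℕ) : FractionRing (MvPolynomial (Fin 3) (ZMod p)) :=
  algebraMap _ _ (rename (Fin.castSucc : Fin 2 → Fin 3) (br p ![a, b]))

noncomputable def Yk (e : ℕ) : FractionRing (MvPolynomial (Fin 3) (ZMod p)) :=
  algebraMap _ _ ((X 2 : MvPolynomial (Fin 3) (ZMod p)) ^ p ^ e)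

lemma Bk_pl (a b c d : ℕ) :
    Bk p a b * Bk p c d - Bk p a c * Bk p b d + Bk p a d * Bk p b c = 0 := by
  simp only [Bk, ← map_mul, ← map_sub, ← map_add]
  rw [br2_plucker, map_zero, map_zero]

lemma Bk_lap (a b c : ℕ) :
    algebraMap (MvPolynomial (Fin 3) (ZMod p)) (FractionRing (MvPolynomial (Fin 3) (ZMod p)))
      (br p ![a, b, c]) = Yk p a * Bk p b c - Yk p b * Bk p a c + Yk p c * Bk p a b := by
  rw [br3_laplace, map_add, map_sub, map_mul, map_mul, map_mul]
  rfl

lemma Bk_self (a : ℕ) : Bk p a a = 0 := by rw [Bk, br2_self, map_zero, map_zero]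

lemma Bk_swap (a b : ℕ) : Bk p b a = -Bk p a b := by
  rw [Bk, Bk, br2_swap, map_neg, map_neg]

lemma ell_pow (s : ℕ) :
    (algebraMap (MvPolynomial (Fin 3) (ZMod p)) (FractionRing (MvPolynomial (Fin 3) (ZMod p)))
      (rename (Fin.castSucc : Fin 2 → Fin 3) (Lpoly p 2))) ^ p ^ s = Bk p s (s + 1) := by
  have he : (fun j : Fin 2 => (![0, 1] : Fin 2 → ℕ) j + s) = ![s, s + 1] := by
    funext j; fin_cases j <;> simp <;> omega
  rw [← map_pow, ← map_pow, Lpoly2_eq, br_pow_pow, he, Bk]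

lemma ell_ne :
    (algebraMap (MvPolynomial (Fin 3) (ZMod p)) (FractionRing (MvPolynomial (Fin 3) (ZMod p)))
      (rename (Fin.castSucc : Fin 2 → Fin 3) (Lpoly p 2))) ≠ 0 := by
  rw [Ne, map_eq_zero_iff _ (IsFractionRing.injective _ _), map_eq_zero_iff _
    (MvPolynomial.rename_injective _ (Fin.castSucc_injective 2))]
  exact Lpoly2_ne p

lemma Bk_ne (s : ℕ) : Bk p s (s + 1) ≠ 0 := by
  rw [← ell_pow]
  exact pow_ne_zero _ (ell_ne p)

noncomputable def gk (u s : ℕ) : FractionRing (MvPolynomial (Fin 3) (ZMod p)) :=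
  (Yk p s * Bk p u (s + 1) - Yk p (s + 1) * Bk p u s) / Bk p s (s + 1)

noncomputable def hk (w s : ℕ) : FractionRing (MvPolynomial (Fin 3) (ZMod p)) :=
  (Yk p s * Bk p (s + 1) w - Yk p (s + 1) * Bk p s w) / Bk p s (s + 1)

lemma gk_u (u : ℕ) : gk p u u = Yk p u := by
  rw [gk, Bk_self, mul_zero, sub_zero, mul_div_assoc, div_self (Bk_ne p u), mul_one]

lemma hk_w (w : ℕ) : hk p w w = -Yk p w := by
  rw [hk, Bk_self, Bk_swap, mul_zero, sub_zero, mul_neg, neg_div, mul_div_assoc,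
    div_self (Bk_ne p w), mul_one]

lemma tele {M : Type*} [AddCommGroup M] (f : ℕ → M) {a b : ℕ} (h : a ≤ b) :
    ∑ s ∈ Finset.Ico a b, (f s - f (s + 1)) = f a - f b := by
  induction b, h using Nat.le_induction with
  | base => simp
  | succ b hb ih =>
      rw [Finset.sum_Ico_succ_top (by omega), ih]
      abel

end Aux

theorem stmt13 (p u v w : ℕ) [hp : Fact p.Prime] (hodd : Odd p) (huv : u < v) (hvw : v < w)
    (V3 : MvPolynomial (Fin 3) (ZMod p))
    (hV3 : rename Fin.castSucc (Lpoly p 2) * V3 = Lpoly p 3) :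
    (algebraMap (MvPolynomial (Fin 3) (ZMod p))
        (FractionRing (MvPolynomial (Fin 3) (ZMod p)))) (br p ![u, v, w]) =
      (∑ s ∈ Finset.Ico u v,
        (algebraMap _ _) (rename Fin.castSucc (br p ![u, s + 1])) *
          (algebraMap _ _) (rename (Fin.castSucc : Fin 2 → Fin 3) (br p ![v, w])) *
          ((algebraMap _ _) (rename (Fin.castSucc : Fin 2 → Fin 3) (Lpoly p 2)))⁻¹ ^ p ^ (s + 1) *
          (algebraMap _ _) V3 ^ p ^ s) +
      ∑ s ∈ Finset.Ico v w,
        (algebraMap _ _) (rename (Fin.castSucc : Fin 2 → Fin 3) (br p ![u, v])) *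
          (algebraMap _ _) (rename (Fin.castSucc : Fin 2 → Fin 3) (br p ![s + 1, w])) *
          ((algebraMap _ _) (rename (Fin.castSucc : Fin 2 → Fin 3) (Lpoly p 2)))⁻¹ ^ p ^ (s + 1) *
          (algebraMap _ _) V3 ^ p ^ s := by
  set K := FractionRing (MvPolynomial (Fin 3) (ZMod p))
  set A : MvPolynomial (Fin 3) (ZMod p) →+* K := algebraMap _ _ with hA
  -- the key power identity for V3
  have hVk : ∀ s : ℕ, (A V3) ^ p ^ s * Bk p s (s + 1) = A (br p ![s, s + 1, s + 2]) := by
    intro s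
    have h := congrArg (fun q => (A q) ^ p ^ s) hV3
    simp only [map_mul, mul_pow] at h
    rw [ell_pow p s] at h
    rw [mul_comm] at h
    rw [h, ← map_pow]
    congr 1
    rw [show (Lpoly p 3) = br p (fun j : Fin 3 => (j : ℕ)) from rfl, br_pow_pow]
    congr 1
    funext j
    fin_cases j <;> simp <;> omega
  have key1 : ∀ s : ℕ,
      A (rename Fin.castSucc (br p ![u, s + 1])) *
        A (rename (Fin.castSucc : Fin 2 → Fin 3) (br p ![v, w])) *
        (A (rename (Fin.castSucc : Fin 2 → Fin 3) (Lpoly p 2)))⁻¹ ^ p ^ (s + 1) *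
        (A V3) ^ p ^ s = Bk p v w * (gk p u s - gk p u (s + 1)) := by
    intro s
    have hAV : (A V3) ^ p ^ s
        = (Yk p s * Bk p (s+1) (s+2) - Yk p (s+1) * Bk p s (s+2) + Yk p (s+2) * Bk p s (s+1))
          / Bk p s (s + 1) := by
      rw [eq_div_iff (Bk_ne p s), hVk, Bk_lap]
    rw [inv_pow, ell_pow, hAV, gk, gk]
    show Bk p u (s+1) * Bk p v w * (Bk p (s+1) (s+1+1))⁻¹ * _ = _
    have h1 := Bk_ne p s
    have h2 := Bk_ne p (s + 1)
    field_simp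
    linear_combination (Bk p v w * Yk p (s+1)) *
      Bk_pl p u s (s+1) (s+2)
  have key2 : ∀ s : ℕ,
      A (rename (Fin.castSucc : Fin 2 → Fin 3) (br p ![u, v])) *
        A (rename (Fin.castSucc : Fin 2 → Fin 3) (br p ![s + 1, w])) *
        (A (rename (Fin.castSucc : Fin 2 → Fin 3) (Lpoly p 2)))⁻¹ ^ p ^ (s + 1) *
        (A V3) ^ p ^ s = Bk p u v * (hk p w s - hk p w (s + 1)) := by
    intro s
    have hAV : (A V3) ^ p ^ s
        = (Yk p s * Bk p (s+1) (s+2) - Yk p (s+1) * Bk p s (s+2) + Yk p (s+2) * Bk p s (s+1))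
          / Bk p s (s + 1) := by
      rw [eq_div_iff (Bk_ne p s), hVk, Bk_lap]
    rw [inv_pow, ell_pow, hAV, hk, hk]
    show Bk p u v * Bk p (s+1) w * (Bk p (s+1) (s+1+1))⁻¹ * _ = _
    have h1 := Bk_ne p s
    have h2 := Bk_ne p (s + 1)
    field_simp
    linear_combination (Bk p u v * Yk p (s+1)) *
      Bk_pl p s (s+1) (s+2) w
  have cross : Bk p v w * gk p u v - Bk p u v * hk p w v = Yk p v * Bk p u w := by
    rw [gk, hk]
    have h1 := Bk_ne p v
    field_simp
    linear_combination (-(Yk p v)) * Bk_pl p u v (v+1) w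
  calc A (br p ![u, v, w]) = Yk p u * Bk p v w - Yk p v * Bk p u w + Yk p w * Bk p u v :=
        Bk_lap p u v w
    _ = Bk p v w * (gk p u u - gk p u v) + Bk p u v * (hk p w v - hk p w w) := by
        rw [gk_u, hk_w]
        linear_combination cross
    _ = _ := by
        rw [← tele (gk p u) huv.le, ← tele (hk p w) hvw.le, Finset.mul_sum, Finset.mul_sum]
        congr 1
        · exact Finset.sum_congr rfl fun s _ => (key1 s).symm
        · exact Finset.sum_congr rfl fun s _ => (key2 s).symm
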